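/- Let ξ₁, ξ₂ be independent nonnegative random variables with E[ξᵢ^a] < ∞ for some a ∈ [1,2]. Then E[(ξ₁+ξ₂)^a] ≤ E[ξ₁^a] + E[ξ₂^a] + (E[ξ₁] + E[ξ₂])^a. -/

import Mathlib

open MeasureTheory ProbabilityTheory

private lemma key_rpow {a : ℝ} (ha1 : 1 ≤ a) {z : ℝ} (hz : 0 ≤ z) :
    z ^ a = z * z ^ (a - 1) := by
  rw [show a = 1 + (a - 1) by ring, Real.rpow_add' hz (by linarith), Real.rpow_one]
  ring_nf

private lemma subadd_rpow {r : ℝ} (hr0 : 0 ≤ r) (hr1 : r ≤ 1) {x y : ℝ}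
    (hx : 0 ≤ x) (hy : 0 ≤ y) : (x + y) ^ r ≤ x ^ r + y ^ r := by
  have h := NNReal.rpow_add_le_add_rpow x.toNNReal y.toNNReal hr0 hr1
  have h' := (NNReal.coe_le_coe).2 h
  rw [← Real.toNNReal_add hx hy] at h'
  simpa [NNReal.coe_rpow, Real.coe_toNNReal _ (by linarith : (0:ℝ) ≤ x + y),
    Real.coe_toNNReal _ hx, Real.coe_toNNReal _ hy] using h'

private lemma ptwise {a : ℝ} (ha1 : 1 ≤ a) (ha2 : a ≤ 2) {x y : ℝ}
    (hx : 0 ≤ x) (hy : 0 ≤ y) :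
    (x + y) ^ a ≤ x ^ a + y ^ a + x * y ^ (a - 1) + y * x ^ (a - 1) := by
  have hxy : 0 ≤ x + y := by linarith
  calc (x + y) ^ a = (x + y) * (x + y) ^ (a - 1) := key_rpow ha1 hxy
    _ ≤ (x + y) * (x ^ (a - 1) + y ^ (a - 1)) := by
        exact mul_le_mul_of_nonneg_left
          (subadd_rpow (by linarith) (by linarith) hx hy) hxy
    _ = x * x ^ (a - 1) + y * y ^ (a - 1) + x * y ^ (a - 1) + y * x ^ (a - 1) := by ring
    _ = x ^ a + y ^ a + x * y ^ (a - 1) + y * x ^ (a - 1) := by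
        rw [← key_rpow ha1 hx, ← key_rpow ha1 hy]

private lemma rpow_le_one_add {a r : ℝ} (hr0 : 0 ≤ r) (hra : r ≤ a) {x : ℝ}
    (hx : 0 ≤ x) : x ^ r ≤ 1 + x ^ a := by
  rcases le_or_gt x 1 with h | h
  · have : x ^ r ≤ 1 := Real.rpow_le_one hx h hr0
    have : (0:ℝ) ≤ x ^ a := Real.rpow_nonneg hx a
    linarith [Real.rpow_le_one hx h hr0]
  · have : x ^ r ≤ x ^ a := Real.rpow_le_rpow_of_exponent_le h.le hra
    have : (0:ℝ) ≤ x ^ a := Real.rpow_nonneg hx a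
    linarith [Real.rpow_le_rpow_of_exponent_le h.le hra]

theorem stmt4 {Ω : Type*} [MeasurableSpace Ω] (μ : Measure Ω) [IsProbabilityMeasure μ]
    (ξ₁ ξ₂ : Ω → ℝ) (hm1 : Measurable ξ₁) (hm2 : Measurable ξ₂)
    (hp1 : ∀ ω, 0 ≤ ξ₁ ω) (hp2 : ∀ ω, 0 ≤ ξ₂ ω)
    (a : ℝ) (ha1 : 1 ≤ a) (ha2 : a ≤ 2)
    (hi1 : Integrable (fun ω => ξ₁ ω ^ a) μ)
    (hi2 : Integrable (fun ω => ξ₂ ω ^ a) μ)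
    (hind : IndepFun ξ₁ ξ₂ μ) :
    ∫ ω, (ξ₁ ω + ξ₂ ω) ^ a ∂μ ≤
      (∫ ω, ξ₁ ω ^ a ∂μ) + (∫ ω, ξ₂ ω ^ a ∂μ) +
        ((∫ ω, ξ₁ ω ∂μ) + (∫ ω, ξ₂ ω ∂μ)) ^ a := by
  have hr0 : (0:ℝ) ≤ a - 1 := by linarith
  have hr1 : a - 1 ≤ 1 := by linarith
  -- measurability of rpow
  have hmc : Measurable (fun x : ℝ => x ^ (a - 1)) :=
    (Real.continuous_rpow_const hr0).measurable
  have hmr1 : Measurable (fun ω => ξ₁ ω ^ (a - 1)) := hmc.comp hm1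
  have hmr2 : Measurable (fun ω => ξ₂ ω ^ (a - 1)) := hmc.comp hm2
  -- integrability of ξᵢ
  have hone : Integrable (fun _ : Ω => (1:ℝ)) μ := integrable_const 1
  have hbound1 : Integrable (fun ω => 1 + ξ₁ ω ^ a) μ := hone.add hi1
  have hbound2 : Integrable (fun ω => 1 + ξ₂ ω ^ a) μ := hone.add hi2
  have hle1 : ∀ {x : ℝ}, 0 ≤ x → x ≤ 1 + x ^ a := by
    intro x hx
    have h := rpow_le_one_add (a := a) (r := 1) zero_le_one ha1 hx
    rwa [Real.rpow_one] at h
  have hint1 : Integrable ξ₁ μ := by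
    refine hbound1.mono' hm1.aestronglyMeasurable (ae_of_all _ fun ω => ?_)
    rw [Real.norm_of_nonneg (hp1 ω)]; exact hle1 (hp1 ω)
  have hint2 : Integrable ξ₂ μ := by
    refine hbound2.mono' hm2.aestronglyMeasurable (ae_of_all _ fun ω => ?_)
    rw [Real.norm_of_nonneg (hp2 ω)]; exact hle1 (hp2 ω)
  -- integrability of ξᵢ ^ (a-1)
  have hir1 : Integrable (fun ω => ξ₁ ω ^ (a - 1)) μ := by
    refine hbound1.mono' hmr1.aestronglyMeasurable (ae_of_all _ fun ω => ?_)
    rw [Real.norm_of_nonneg (Real.rpow_nonneg (hp1 ω) _)]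
    exact rpow_le_one_add hr0 (by linarith) (hp1 ω)
  have hir2 : Integrable (fun ω => ξ₂ ω ^ (a - 1)) μ := by
    refine hbound2.mono' hmr2.aestronglyMeasurable (ae_of_all _ fun ω => ?_)
    rw [Real.norm_of_nonneg (Real.rpow_nonneg (hp2 ω) _)]
    exact rpow_le_one_add hr0 (by linarith) (hp2 ω)
  -- independence of transformed variables
  have hind12 : IndepFun ξ₁ (fun ω => ξ₂ ω ^ (a - 1)) μ :=
    hind.comp measurable_id (hmc)
  have hind21 : IndepFun ξ₂ (fun ω => ξ₁ ω ^ (a - 1)) μ :=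
    hind.symm.comp measurable_id
      (hmc)
  -- integrability of products
  have hprod12 : Integrable (fun ω => ξ₁ ω * ξ₂ ω ^ (a - 1)) μ :=
    hind12.integrable_mul hint1 hir2
  have hprod21 : Integrable (fun ω => ξ₂ ω * ξ₁ ω ^ (a - 1)) μ :=
    hind21.integrable_mul hint2 hir1
  -- the dominating function
  have hsum : Integrable (fun ω => ξ₁ ω ^ a + ξ₂ ω ^ a + ξ₁ ω * ξ₂ ω ^ (a - 1)
      + ξ₂ ω * ξ₁ ω ^ (a - 1)) μ := ((hi1.add hi2).add hprod12).add hprod21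
  -- integrability of the LHS
  have hlhs : Integrable (fun ω => (ξ₁ ω + ξ₂ ω) ^ a) μ := by
    refine hsum.mono' (((Real.continuous_rpow_const (by linarith : (0:ℝ) ≤ a)).measurable.comp (hm1.add hm2))).aestronglyMeasurable
      (ae_of_all _ fun ω => ?_)
    rw [Real.norm_of_nonneg (Real.rpow_nonneg (by linarith [hp1 ω, hp2 ω]) _)]
    exact ptwise ha1 ha2 (hp1 ω) (hp2 ω)
  -- step 1: integral of pointwise bound
  have step1 : ∫ ω, (ξ₁ ω + ξ₂ ω) ^ a ∂μ ≤ ∫ ω, (ξ₁ ω ^ a + ξ₂ ω ^ a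
      + ξ₁ ω * ξ₂ ω ^ (a - 1) + ξ₂ ω * ξ₁ ω ^ (a - 1)) ∂μ :=
    integral_mono hlhs hsum fun ω => ptwise ha1 ha2 (hp1 ω) (hp2 ω)
  have hiA : Integrable (fun ω => ξ₁ ω ^ a + ξ₂ ω ^ a) μ := hi1.add hi2
  have hiB : Integrable (fun ω => ξ₁ ω ^ a + ξ₂ ω ^ a + ξ₁ ω * ξ₂ ω ^ (a - 1)) μ :=
    hiA.add hprod12
  rw [integral_add hiB hprod21, integral_add hiA hprod12, integral_add hi1 hi2] at step1
  -- independence factorization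
  have hfac12 : ∫ ω, ξ₁ ω * ξ₂ ω ^ (a - 1) ∂μ
      = (∫ ω, ξ₁ ω ∂μ) * ∫ ω, ξ₂ ω ^ (a - 1) ∂μ :=
    hind12.integral_fun_mul_eq_mul_integral hm1.aestronglyMeasurable hmr2.aestronglyMeasurable
  have hfac21 : ∫ ω, ξ₂ ω * ξ₁ ω ^ (a - 1) ∂μ
      = (∫ ω, ξ₂ ω ∂μ) * ∫ ω, ξ₁ ω ^ (a - 1) ∂μ :=
    hind21.integral_fun_mul_eq_mul_integral hm2.aestronglyMeasurable hmr1.aestronglyMeasurable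
  -- Jensen's inequality
  have hcont : ContinuousOn (fun x : ℝ => x ^ (a - 1)) (Set.Ici 0) :=
    (Real.continuous_rpow_const hr0).continuousOn
  have jensen : ∀ (ξ : Ω → ℝ), (∀ ω, 0 ≤ ξ ω) → Integrable ξ μ →
      Integrable (fun ω => ξ ω ^ (a - 1)) μ →
      ∫ ω, ξ ω ^ (a - 1) ∂μ ≤ (∫ ω, ξ ω ∂μ) ^ (a - 1) := by
    intro ξ hp hi hir
    exact (Real.concaveOn_rpow hr0 hr1).le_map_integral hcont isClosed_Ici
      (ae_of_all _ fun ω => hp ω) hi hir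
  have hj1 := jensen ξ₁ hp1 hint1 hir1
  have hj2 := jensen ξ₂ hp2 hint2 hir2
  -- notation for means
  set s := ∫ ω, ξ₁ ω ∂μ with hs
  set t := ∫ ω, ξ₂ ω ∂μ with ht
  have hs0 : 0 ≤ s := integral_nonneg hp1
  have ht0 : 0 ≤ t := integral_nonneg hp2
  have hcross : (∫ ω, ξ₁ ω * ξ₂ ω ^ (a - 1) ∂μ) + (∫ ω, ξ₂ ω * ξ₁ ω ^ (a - 1) ∂μ)
      ≤ (s + t) ^ a := by
    rw [hfac12, hfac21]
    have h1 : s * (∫ ω, ξ₂ ω ^ (a - 1) ∂μ) ≤ s * t ^ (a - 1) :=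
      mul_le_mul_of_nonneg_left hj2 hs0
    have h2 : t * (∫ ω, ξ₁ ω ^ (a - 1) ∂μ) ≤ t * s ^ (a - 1) :=
      mul_le_mul_of_nonneg_left hj1 ht0
    have h3 : t ^ (a - 1) ≤ (s + t) ^ (a - 1) :=
      Real.rpow_le_rpow ht0 (by linarith) hr0
    have h4 : s ^ (a - 1) ≤ (s + t) ^ (a - 1) :=
      Real.rpow_le_rpow hs0 (by linarith) hr0
    have h5 : s * t ^ (a - 1) + t * s ^ (a - 1) ≤ (s + t) * (s + t) ^ (a - 1) := by
      nlinarith [mul_le_mul_of_nonneg_left h3 hs0, mul_le_mul_of_nonneg_left h4 ht0]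
    rw [key_rpow ha1 (by linarith : (0:ℝ) ≤ s + t)]
    linarith
  linarith [step1, hcross]
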